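/- Let G' = (V,E') be a graph, C' a cycle of G' with a chord, and e ∈ C'. Then the cycle inequality x_e ≤ Σ_{e' ∈ C' \ {e}} x_{e'} is implied by the cycle inequalities of two shorter cycles obtained by splitting C' at the chord, and hence is not facet-defining for the multicut polytope of G'. -/

import Mathlib

open SimpleGraph

variable {V : Type}

section Defs

variable [Fintype V] [DecidableEq V]

/-- A decomposition of a graph `G`: a partition of the vertex set into
blocks each of which induces a connected subgraph of `G`. -/
def IsDecomposition (G : SimpleGraph V) (P : Set (Set V)) : Prop :=
  (∀ U ∈ P, ∀ W ∈ P, U ≠ W → Disjoint U W) ∧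
  (∀ v : V, ∃ U ∈ P, v ∈ U) ∧
  (∀ U ∈ P, (G.induce U).Connected)

/-- An edge `e` straddles distinct blocks of `P` if no block contains both endpoints. -/
def Straddles (P : Set (Set V)) (e : Sym2 V) : Prop := ∀ U ∈ P, ¬ ∀ v ∈ e, v ∈ U

/-- The set of edges of `G` straddling distinct blocks of `P` (the map `φ_G`). -/
def cutEdges (G : SimpleGraph V) (P : Set (Set V)) : Set (Sym2 V) :=
  {e | e ∈ G.edgeSet ∧ Straddles P e}

/-- A multicut of `G`: a set of edges meeting every cycle of `G` in a number of
edges different from 1. -/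
def IsMulticut (G : SimpleGraph V) (M : Set (Sym2 V)) : Prop :=
  M ⊆ G.edgeSet ∧ ∀ ⦃u : V⦄ (c : G.Walk u u), c.IsCycle →
    (M ∩ {e | e ∈ c.edges}).ncard ≠ 1

/-- A multicut of `G'` lifted from `G`. -/
def IsLiftedMulticut (G G' : SimpleGraph V) (M : Set (Sym2 V)) : Prop :=
  ∃ P : Set (Set V), IsDecomposition G P ∧ M = cutEdges G' P

/-- The closed walk `c` has a chord in the graph `H`: an edge of `H` joining two
vertices of `c` that is not an edge of `c`. -/
def HasChord (H : SimpleGraph V) {G : SimpleGraph V} {u : V} (c : G.Walk u u) : Prop :=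
  ∃ e ∈ H.edgeSet, (∀ v ∈ e, v ∈ c.support) ∧ e ∉ c.edges

/-- A `vw`-cut of `G`: a minimal set of edges whose removal disconnects `v` from `w`. -/
def IsCut (G : SimpleGraph V) (v w : V) (C : Finset (Sym2 V)) : Prop :=
  ↑C ⊆ G.edgeSet ∧ ¬ (G.deleteEdges ↑C).Reachable v w ∧
    ∀ C' : Finset (Sym2 V), C' ⊂ C → (G.deleteEdges ↑C').Reachable v w

/-- The cycle inequalities for cycles of `G`. -/
def CycleIneqs (G : SimpleGraph V) (x : Sym2 V → ℕ) : Prop :=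
  ∀ ⦃u : V⦄ (c : G.Walk u u), c.IsCycle → ∀ e ∈ c.edges,
    x e ≤ ∑ e' ∈ c.edges.toFinset.erase e, x e'

/-- The path inequalities for pairs `vw ∈ E' \ E` and `vw`-paths of `G`. -/
def PathIneqs (G G' : SimpleGraph V) (x : Sym2 V → ℕ) : Prop :=
  ∀ v w : V, s(v, w) ∈ G'.edgeSet \ G.edgeSet →
    ∀ p : G.Walk v w, p.IsPath → x s(v, w) ≤ ∑ e ∈ p.edges.toFinset, x e

/-- The cut inequalities for pairs `vw ∈ E' \ E` and `vw`-cuts of `G`. -/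
def CutIneqs (G G' : SimpleGraph V) (x : Sym2 V → ℕ) : Prop :=
  ∀ v w : V, s(v, w) ∈ G'.edgeSet \ G.edgeSet →
    ∀ C : Finset (Sym2 V), IsCut G v w C → 1 - x s(v, w) ≤ ∑ e ∈ C, (1 - x e)

/-- Characteristic vector of an edge set, in `ℝ^{Sym2 V}`. -/
noncomputable def charVec (M : Set (Sym2 V)) : Sym2 V → ℝ :=
  fun e => by classical exact if e ∈ M then 1 else 0

/-- The characteristic vectors of multicuts of `G'` lifted from `G`
(the vertex set of the lifted multicut polytope `Ξ_{GG'}`). -/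
def liftedVectors (G G' : SimpleGraph V) : Set (Sym2 V → ℝ) :=
  {x | ∃ M : Set (Sym2 V), IsLiftedMulticut G G' M ∧ x = charVec M}

/-- The characteristic vectors of multicuts of `G'`. -/
def multicutVectors (G' : SimpleGraph V) : Set (Sym2 V → ℝ) :=
  {x | ∃ M : Set (Sym2 V), IsMulticut G' M ∧ x = charVec M}

/-- The inequality `ineq`, with associated equality `eqn`, defines a facet of the
lifted multicut polytope `Ξ_{GG'}` (which has dimension `|E'|`): it is valid, and
the face it induces has dimension `|E'| - 1`. -/
def DefinesFacet (G G' : SimpleGraph V) (ineq eqn : (Sym2 V → ℝ) → Prop) : Prop :=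
  (∀ x ∈ liftedVectors G G', ineq x) ∧
  Module.finrank ℝ (vectorSpan ℝ {x ∈ liftedVectors G G' | eqn x}) = G'.edgeSet.ncard - 1

/-- Facet-defining for the multicut polytope `Ξ_{G'}`. -/
def DefinesFacetMC (G' : SimpleGraph V) (ineq eqn : (Sym2 V → ℝ) → Prop) : Prop :=
  (∀ x ∈ multicutVectors G', ineq x) ∧
  Module.finrank ℝ (vectorSpan ℝ {x ∈ multicutVectors G' | eqn x}) = G'.edgeSet.ncard - 1

/-- `u` is a `v`-`w`-cut-vertex: it lies on every `vw`-path of `G`. -/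
def IsCutVertex (G : SimpleGraph V) (v w u : V) : Prop :=
  ∀ p : G.Walk v w, p.IsPath → u ∈ p.support

/-- `S` is a `u`-`v`-separating node set of `G`. -/
def IsSeparatingSet (G : SimpleGraph V) (u v : V) (S : Set V) : Prop :=
  u ∉ S ∧ v ∉ S ∧ ∀ p : G.Walk u v, p.IsPath → ∃ s ∈ S, s ∈ p.support

/-- The side of the cut `C` containing `v`. -/
def vSide (G : SimpleGraph V) (C : Finset (Sym2 V)) (v : V) : Set V :=
  {u | (G.deleteEdges ↑C).Reachable v u}

/-- The component of `G` induced by `U` is properly `(vw,C)`-connected. -/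
def ProperlyConnected (G : SimpleGraph V) (v w : V) (C : Finset (Sym2 V)) (U : Set V) : Prop :=
  (G.induce U).Connected ∧ v ∈ U ∧ w ∈ U ∧
    ({e | e ∈ C ∧ ∀ u ∈ e, u ∈ U} : Set (Sym2 V)).ncard = 1

/-- The component of `G` induced by `U` is improperly `(vw,C)`-connected. -/
def ImproperlyConnected (G : SimpleGraph V) (v w : V) (C : Finset (Sym2 V)) (U : Set V) : Prop :=
  (G.induce U).Connected ∧ (U ⊆ vSide G C v ∨ U ⊆ vSide G C w)

/-- `(vw,C)`-connected: properly or improperly so. -/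
def VWCConnected (G : SimpleGraph V) (v w : V) (C : Finset (Sym2 V)) (U : Set V) : Prop :=
  ProperlyConnected G v w C U ∨ ImproperlyConnected G v w C U

/-- The vertex set of the maximal component of `H` containing `u`. -/
def compSupp (H : SimpleGraph V) (u : V) : Set V := {u' | H.Reachable u u'}

end Defs
/-- The real cycle inequality of a closed walk `c` at an edge `e`. -/
def cycleIneqR [DecidableEq V] {G' : SimpleGraph V} {u : V} (c : G'.Walk u u)
    (e : Sym2 V) (x : Sym2 V → ℝ) : Prop :=
  x e ≤ ∑ e' ∈ c.edges.toFinset.erase e, x e'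


section AuxProof

variable [Fintype V] [DecidableEq V] {G' : SimpleGraph V}

lemma charVec_nonneg (M : Set (Sym2 V)) (e : Sym2 V) : 0 ≤ charVec M e := by
  unfold charVec; split <;> norm_num

lemma charVec_eq_one {M : Set (Sym2 V)} {e : Sym2 V} (h : e ∈ M) : charVec M e = 1 := by
  simp [charVec, h]

lemma charVec_eq_zero {M : Set (Sym2 V)} {e : Sym2 V} (h : e ∉ M) : charVec M e = 0 := by
  simp [charVec, h]

lemma multicut_cycle_valid {M : Set (Sym2 V)} (hM : IsMulticut G' M)
    {u : V} (c : G'.Walk u u) (hc : c.IsCycle) {e : Sym2 V} (he : e ∈ c.edges) :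
    cycleIneqR c e (charVec M) := by
  unfold cycleIneqR
  by_cases heM : e ∈ M
  · have hex : ∃ e' ∈ c.edges.toFinset.erase e, e' ∈ M := by
      by_contra hno
      push_neg at hno
      have hset : M ∩ {e' | e' ∈ c.edges} = {e} := by
        ext e'
        simp only [Set.mem_inter_iff, Set.mem_setOf_eq, Set.mem_singleton_iff]
        constructor
        · rintro ⟨h1, h2⟩
          by_contra hne
          exact hno e' (Finset.mem_erase.mpr ⟨hne, List.mem_toFinset.mpr h2⟩) h1
        · rintro rfl; exact ⟨heM, he⟩
      have h1 := hM.2 c hc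
      rw [hset, Set.ncard_singleton] at h1
      exact h1 rfl
    obtain ⟨e', he', hM'⟩ := hex
    calc charVec M e = charVec M e' := by rw [charVec_eq_one heM, charVec_eq_one hM']
    _ ≤ _ := Finset.single_le_sum (fun i _ => charVec_nonneg M i) he'
  · rw [charVec_eq_zero heM]
    exact Finset.sum_nonneg fun i _ => charVec_nonneg M i

/-- The linear subspace of vectors vanishing off `E` and tight for two
linear equations. -/
def tightSubmodule (E : Set (Sym2 V)) (e f : Sym2 V) (s₁ s₂ : Finset (Sym2 V)) :
    Submodule ℝ (Sym2 V → ℝ) where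
  carrier := {y | (∀ e' ∉ E, y e' = 0) ∧ y e = ∑ e' ∈ s₁, y e' ∧ y f = ∑ e' ∈ s₂, y e'}
  add_mem' := by
    rintro y z ⟨hy0, hy1, hy2⟩ ⟨hz0, hz1, hz2⟩
    refine ⟨fun e' h => by simp [hy0 e' h, hz0 e' h], ?_, ?_⟩ <;>
      simp [Finset.sum_add_distrib, hy1, hz1, hy2, hz2]
  zero_mem' := by simp
  smul_mem' := by
    rintro t y ⟨hy0, hy1, hy2⟩
    refine ⟨fun e' h => by simp [hy0 e' h], ?_, ?_⟩ <;>
      simp [Finset.mul_sum, hy1, hy2]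

lemma mem_tightSubmodule {E : Set (Sym2 V)} {e f : Sym2 V} {s₁ s₂ : Finset (Sym2 V)}
    {y : Sym2 V → ℝ} : y ∈ tightSubmodule E e f s₁ s₂ ↔
      (∀ e' ∉ E, y e' = 0) ∧ y e = ∑ e' ∈ s₁, y e' ∧ y f = ∑ e' ∈ s₂, y e' := Iff.rfl

/-- Core lemma: given the two `ab`-paths forming the cycle, both conclusions. -/
lemma core_split (G' : SimpleGraph V) {u0 : V} (c : G'.Walk u0 u0)
    {a b : V} (hchord : G'.Adj a b)
    (R₁ R₂ : G'.Walk b a) (hR1 : R₁.IsPath) (hR2 : R₂.IsPath)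
    (hab1 : s(a, b) ∉ R₁.edges) (hab2 : s(a, b) ∉ R₂.edges)
    {e : Sym2 V} (he1 : e ∈ R₁.edges)
    (hmem : ∀ e', e' ∈ c.edges ↔ e' ∈ R₁.edges ∨ e' ∈ R₂.edges)
    (hdisj : ∀ e', e' ∈ R₁.edges → e' ∉ R₂.edges) :
    (∃ (c₁ : G'.Walk a a) (c₂ : G'.Walk a a), c₁.IsCycle ∧ c₂.IsCycle ∧
      s(a, b) ∈ c₁.edges ∧ s(a, b) ∈ c₂.edges ∧ e ∈ c₁.edges ∧
      {e' | e' ∈ c₁.edges} ∪ {e' | e' ∈ c₂.edges} = insert s(a, b) {e' | e' ∈ c.edges} ∧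
      {e' | e' ∈ c₁.edges} ∩ {e' | e' ∈ c₂.edges} = {s(a, b)} ∧
      ∀ x : Sym2 V → ℝ, cycleIneqR c₁ e x → cycleIneqR c₂ s(a, b) x →
        cycleIneqR c e x) ∧
    ¬ DefinesFacetMC G' (fun x => cycleIneqR c e x)
        (fun x => x e = ∑ e' ∈ c.edges.toFinset.erase e, x e') := by
  classical
  set c₁ : G'.Walk a a := Walk.cons hchord R₁ with hc₁def
  set c₂ : G'.Walk a a := Walk.cons hchord R₂ with hc₂def
  have heab : e ≠ s(a, b) := fun h => hab1 (h ▸ he1)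
  have hc₁ : c₁.IsCycle := (Walk.cons_isCycle_iff R₁ hchord).mpr ⟨hR1, hab1⟩
  have hc₂ : c₂.IsCycle := (Walk.cons_isCycle_iff R₂ hchord).mpr ⟨hR2, hab2⟩
  have hc₁e : c₁.edges = s(a, b) :: R₁.edges := rfl
  have hc₂e : c₂.edges = s(a, b) :: R₂.edges := rfl
  have heF2 : e ∉ R₂.edges.toFinset := by simpa using hdisj e he1
  have habF1 : s(a, b) ∉ R₁.edges.toFinset := by simpa using hab1
  have habF2 : s(a, b) ∉ R₂.edges.toFinset := by simpa using hab2
  have hs1 : c₁.edges.toFinset.erase e = insert s(a, b) (R₁.edges.toFinset.erase e) := by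
    rw [hc₁e, List.toFinset_cons, Finset.erase_insert_of_ne (Ne.symm heab)]
  have hs2 : c₂.edges.toFinset.erase s(a, b) = R₂.edges.toFinset := by
    rw [hc₂e, List.toFinset_cons, Finset.erase_insert habF2]
  have hcF : c.edges.toFinset = R₁.edges.toFinset ∪ R₂.edges.toFinset := by
    ext e'; simp [hmem e']
  have hFdisj : Disjoint R₁.edges.toFinset R₂.edges.toFinset :=
    Finset.disjoint_left.mpr (by
      intro e' h1 h2
      exact hdisj e' (by simpa using h1) (by simpa using h2))
  have hsc : c.edges.toFinset.erase e = R₁.edges.toFinset.erase e ∪ R₂.edges.toFinset := by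
    rw [hcF, Finset.erase_union_distrib, Finset.erase_eq_of_notMem heF2]
  have habe1 : s(a, b) ∉ R₁.edges.toFinset.erase e := fun h => habF1 (Finset.mem_of_mem_erase h)
  have hdisj' : Disjoint (R₁.edges.toFinset.erase e) R₂.edges.toFinset :=
    Finset.disjoint_of_subset_left (Finset.erase_subset _ _) hFdisj
  have hsum : ∀ x : Sym2 V → ℝ,
      (∑ e' ∈ c₁.edges.toFinset.erase e, x e') + (∑ e' ∈ c₂.edges.toFinset.erase s(a, b), x e')
        = x s(a, b) + ∑ e' ∈ c.edges.toFinset.erase e, x e' := by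
    intro x
    rw [hs1, hs2, hsc, Finset.sum_insert habe1, Finset.sum_union hdisj']
    ring
  have habc₁ : s(a, b) ∈ c₁.edges := by rw [hc₁e]; exact List.mem_cons_self
  have habc₂ : s(a, b) ∈ c₂.edges := by rw [hc₂e]; exact List.mem_cons_self
  have hec₁ : e ∈ c₁.edges := by rw [hc₁e]; exact List.mem_cons_of_mem _ he1
  have htight : ∀ M : Set (Sym2 V), IsMulticut G' M →
      charVec M e = ∑ e' ∈ c.edges.toFinset.erase e, charVec M e' →
      charVec M e = ∑ e' ∈ c₁.edges.toFinset.erase e, charVec M e' ∧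
      charVec M s(a, b) = ∑ e' ∈ c₂.edges.toFinset.erase s(a, b), charVec M e' := by
    intro M hM heq
    have v₁ := multicut_cycle_valid hM c₁ hc₁ hec₁
    have v₂ := multicut_cycle_valid hM c₂ hc₂ habc₂
    unfold cycleIneqR at v₁ v₂
    have hs := hsum (charVec M)
    constructor <;> linarith
  constructor
  · refine ⟨c₁, c₂, hc₁, hc₂, habc₁, habc₂, hec₁, ?_, ?_, ?_⟩
    · ext e'
      simp only [Set.mem_union, Set.mem_setOf_eq, Set.mem_insert_iff, hc₁e, hc₂e,
        List.mem_cons, hmem e']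
      tauto
    · ext e'
      simp only [Set.mem_inter_iff, Set.mem_setOf_eq, Set.mem_singleton_iff, hc₁e, hc₂e,
        List.mem_cons]
      constructor
      · rintro ⟨h1 | h1, h2 | h2⟩ <;> first | assumption | exact absurd h2 (hdisj _ h1)
      · rintro rfl; exact ⟨Or.inl rfl, Or.inl rfl⟩
    · intro x h1 h2
      unfold cycleIneqR at h1 h2 ⊢
      have := hsum x
      linarith
  · rintro ⟨-, hdim⟩
    set s₁ := c₁.edges.toFinset.erase e with hs₁def
    set s₂ := c₂.edges.toFinset.erase s(a, b) with hs₂def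
    set U := tightSubmodule G'.edgeSet e s(a, b) s₁ s₂ with hUdef
    set S := {x ∈ multicutVectors G' | x e = ∑ e' ∈ c.edges.toFinset.erase e, x e'} with hSdef
    have hSU : ∀ x ∈ S, (∀ e' ∉ G'.edgeSet, x e' = 0) ∧
        x e = ∑ e' ∈ s₁, x e' ∧ x s(a, b) = ∑ e' ∈ s₂, x e' := by
      rintro x ⟨⟨M, hM, rfl⟩, heq⟩
      have h0 : ∀ e' ∉ G'.edgeSet, charVec M e' = 0 := fun e' he' =>
        charVec_eq_zero fun hmem' => he' (hM.1 hmem')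
      obtain ⟨h1, h2⟩ := htight M hM heq
      exact ⟨h0, h1, h2⟩
    have hspan : vectorSpan ℝ S ≤ U := by
      rw [vectorSpan_def]
      apply Submodule.span_le.mpr
      rintro y hy
      rw [Set.mem_vsub] at hy
      obtain ⟨x1, hx1, x2, hx2, rfl⟩ := hy
      obtain ⟨h10, h11, h12⟩ := hSU x1 hx1
      obtain ⟨h20, h21, h22⟩ := hSU x2 hx2
      rw [SetLike.mem_coe, hUdef, mem_tightSubmodule, vsub_eq_sub]
      refine ⟨fun e' h => by simp [h10 e' h, h20 e' h], ?_, ?_⟩ <;>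
        simp only [Pi.sub_apply, Finset.sum_sub_distrib, h11, h21, h12, h22]
    set T := G'.edgeFinset \ {e, s(a, b)} with hTdef
    have hs₂T : s₂ ⊆ T := by
      intro t ht
      rw [hs2] at ht
      rw [hTdef, Finset.mem_sdiff, SimpleGraph.mem_edgeFinset]
      refine ⟨R₂.edges_subset_edgeSet (by simpa using ht), ?_⟩
      simp only [Finset.mem_insert, Finset.mem_singleton]
      push_neg
      exact ⟨fun h => heF2 (h ▸ ht), fun h => habF2 (h ▸ ht)⟩
    have hs₁T : ∀ t ∈ s₁, t = s(a, b) ∨ t ∈ T := by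
      intro t ht
      rw [hs1] at ht
      rcases Finset.mem_insert.mp ht with rfl | ht'
      · exact Or.inl rfl
      · refine Or.inr ?_
        have htR : t ∈ R₁.edges.toFinset := Finset.mem_of_mem_erase ht'
        rw [hTdef, Finset.mem_sdiff, SimpleGraph.mem_edgeFinset]
        refine ⟨R₁.edges_subset_edgeSet (by simpa using htR), ?_⟩
        simp only [Finset.mem_insert, Finset.mem_singleton]
        push_neg
        exact ⟨(Finset.mem_erase.mp ht').1, fun h => habF1 (h ▸ htR)⟩
    have hker : ∀ y ∈ U, (∀ t ∈ T, y t = 0) → y = 0 := by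
      intro y hy hT
      obtain ⟨hy0, hy1, hy2⟩ := hy
      have hab0 : y s(a, b) = 0 := by
        rw [hy2]; exact Finset.sum_eq_zero fun t ht => hT t (hs₂T ht)
      have he0 : y e = 0 := by
        rw [hy1]
        refine Finset.sum_eq_zero fun t ht => ?_
        rcases hs₁T t ht with rfl | hT' <;> [exact hab0; exact hT t hT']
      funext e'
      show y e' = 0
      by_cases h1 : e' ∈ G'.edgeSet
      · by_cases h2 : e' = e
        · exact h2 ▸ he0
        · by_cases h3 : e' = s(a, b)
          · exact h3 ▸ hab0
          · refine hT e' ?_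
            rw [hTdef, Finset.mem_sdiff, SimpleGraph.mem_edgeFinset]
            simp [h1, h2, h3]
      · exact hy0 e' h1
    let r : (Sym2 V → ℝ) →ₗ[ℝ] ({t // t ∈ T} → ℝ) :=
      LinearMap.funLeft ℝ ℝ fun t => (t : Sym2 V)
    have hUfin : Module.finrank ℝ U ≤ T.card := by
      have hinj : Function.Injective (r.domRestrict U) := by
        rw [← LinearMap.ker_eq_bot, LinearMap.ker_eq_bot']
        rintro ⟨y, hy⟩ hm
        apply Subtype.ext
        refine hker y hy fun t ht => ?_
        simpa [r, LinearMap.funLeft, LinearMap.domRestrict_apply] using congrFun hm ⟨t, ht⟩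
      calc Module.finrank ℝ U ≤ Module.finrank ℝ ({t // t ∈ T} → ℝ) :=
            LinearMap.finrank_le_finrank_of_injective hinj
        _ = T.card := by rw [Module.finrank_fintype_fun_eq_card, Fintype.card_coe]
    have heEF : e ∈ G'.edgeFinset := by
      rw [SimpleGraph.mem_edgeFinset]
      exact c.edges_subset_edgeSet ((hmem e).mpr (Or.inl he1))
    have habEF : s(a, b) ∈ G'.edgeFinset := by
      rw [SimpleGraph.mem_edgeFinset, SimpleGraph.mem_edgeSet]; exact hchord
    have hpair : ({e, s(a, b)} : Finset (Sym2 V)) ⊆ G'.edgeFinset := by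
      intro t ht
      rcases Finset.mem_insert.mp ht with rfl | ht
      · exact heEF
      · rw [Finset.mem_singleton] at ht; subst ht; exact habEF
    have hpaircard : ({e, s(a, b)} : Finset (Sym2 V)).card = 2 := Finset.card_pair heab
    have hTcard : T.card = G'.edgeFinset.card - 2 := by
      rw [hTdef, Finset.card_sdiff_of_subset hpair, hpaircard]
    have hEcard : G'.edgeSet.ncard = G'.edgeFinset.card := by
      rw [← SimpleGraph.coe_edgeFinset, Set.ncard_coe_finset]
    have h2le : 2 ≤ G'.edgeFinset.card := hpaircard ▸ Finset.card_le_card hpair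
    have hfinal : G'.edgeSet.ncard - 1 ≤ G'.edgeFinset.card - 2 := by
      rw [← hdim, ← hTcard]
      exact le_trans (Submodule.finrank_mono hspan) hUfin
    rw [hEcard] at hfinal
    omega

lemma start_mem_tail_support {G : SimpleGraph V} {u : V} {c : G.Walk u u}
    (hc : c ≠ SimpleGraph.Walk.nil) : u ∈ c.support.tail := by
  cases c with
  | nil => exact absurd rfl hc
  | cons h p => simpa using Walk.end_mem_support p

lemma cycle_split {a b : V} (hab : a ≠ b)
    (d : G'.Walk a a) (hd : d.IsCycle) (hb : b ∈ d.support) :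
    ∃ (P : G'.Walk a b) (Q : G'.Walk b a), P.IsPath ∧ Q.IsPath ∧
      d.edges = P.edges ++ Q.edges := by
  have hspec := d.take_spec hb
  have htail : d.support.tail
      = (d.takeUntil b hb).support.tail ++ (d.dropUntil b hb).support.tail := by
    conv_lhs => rw [← hspec]
    exact Walk.tail_support_append _ _
  have hnd : ((d.takeUntil b hb).support.tail ++ (d.dropUntil b hb).support.tail).Nodup :=
    htail ▸ hd.support_nodup
  rw [List.nodup_append] at hnd
  obtain ⟨ndP, ndQ, hdisjsupp⟩ := hnd
  have haQ : a ∈ (d.dropUntil b hb).support.tail := by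
    have h := Walk.end_mem_support (d.dropUntil b hb)
    rw [Walk.support_eq_cons (d.dropUntil b hb)] at h
    rcases List.mem_cons.mp h with h | h
    · exact absurd h hab
    · exact h
  have haP : a ∉ (d.takeUntil b hb).support.tail := fun h => hdisjsupp a h a haQ rfl
  have hbP : b ∈ (d.takeUntil b hb).support.tail := by
    have h := Walk.end_mem_support (d.takeUntil b hb)
    rw [Walk.support_eq_cons (d.takeUntil b hb)] at h
    rcases List.mem_cons.mp h with h | h
    · exact absurd h hab.symm
    · exact h
  have hbQ : b ∉ (d.dropUntil b hb).support.tail := fun h => hdisjsupp b hbP b h rfl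
  refine ⟨d.takeUntil b hb, d.dropUntil b hb, ?_, ?_, ?_⟩
  · rw [Walk.isPath_def, Walk.support_eq_cons, List.nodup_cons]
    exact ⟨haP, ndP⟩
  · rw [Walk.isPath_def, Walk.support_eq_cons, List.nodup_cons]
    exact ⟨hbQ, ndQ⟩
  · conv_lhs => rw [← hspec]
    exact Walk.edges_append _ _

end AuxProof
/-- If a cycle `C'` of `G'` has a chord `ab`, then for every
`e ∈ C'` the cycle inequality of `C'` at `e` is implied by the cycle inequalities
of the two shorter cycles obtained by splitting `C'` at the chord, and hence is
not facet-defining for the multicut polytope of `G'`. -/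
theorem chordal_cycle_inequality_not_facet [Fintype V] [DecidableEq V]
    (G' : SimpleGraph V) {u0 : V} (c : G'.Walk u0 u0) (hc : c.IsCycle)
    (a b : V) (hchord : G'.Adj a b) (ha : a ∈ c.support) (hb : b ∈ c.support)
    (hnotedge : s(a, b) ∉ c.edges) (e : Sym2 V) (he : e ∈ c.edges) :
    (∃ (c₁ : G'.Walk a a) (c₂ : G'.Walk a a), c₁.IsCycle ∧ c₂.IsCycle ∧
      s(a, b) ∈ c₁.edges ∧ s(a, b) ∈ c₂.edges ∧ e ∈ c₁.edges ∧
      {e' | e' ∈ c₁.edges} ∪ {e' | e' ∈ c₂.edges} = insert s(a, b) {e' | e' ∈ c.edges} ∧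
      {e' | e' ∈ c₁.edges} ∩ {e' | e' ∈ c₂.edges} = {s(a, b)} ∧
      ∀ x : Sym2 V → ℝ, cycleIneqR c₁ e x → cycleIneqR c₂ s(a, b) x →
        cycleIneqR c e x) ∧
    ¬ DefinesFacetMC G' (fun x => cycleIneqR c e x)
        (fun x => x e = ∑ e' ∈ c.edges.toFinset.erase e, x e') := by
  classical
  have hne : a ≠ b := hchord.ne
  have hbt : b ∈ c.support.tail := by
    have h := hb
    rw [Walk.support_eq_cons c] at h
    rcases List.mem_cons.mp h with h | h
    · subst h
      exact start_mem_tail_support hc.ne_nil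
    · exact h
  have hd : (c.rotate a ha).IsCycle := hc.rotate ha
  have hrot := Walk.support_rotate c a ha
  have hbd : b ∈ (c.rotate a ha).support := by
    rw [Walk.support_eq_cons]
    exact List.mem_cons_of_mem _ (hrot.perm.mem_iff.mpr hbt)
  have hedgesrot : ∀ e', e' ∈ (c.rotate a ha).edges ↔ e' ∈ c.edges :=
    fun e' => (Walk.rotate_edges c a ha).perm.mem_iff
  obtain ⟨P, Q, hP, hQ, hPQ⟩ := cycle_split hne (c.rotate a ha) hd hbd
  have hmem' : ∀ e', e' ∈ c.edges ↔ e' ∈ P.edges ∨ e' ∈ Q.edges := by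
    intro e'
    rw [← hedgesrot e', hPQ, List.mem_append]
  have hndPQ : (P.edges ++ Q.edges).Nodup := hPQ ▸ hd.edges_nodup
  rw [List.nodup_append] at hndPQ
  have hdisjPQ : ∀ e', e' ∈ P.edges → e' ∉ Q.edges := fun e' h1 h2 => hndPQ.2.2 e' h1 e' h2 rfl
  have habP : s(a, b) ∉ P.edges := fun h => hnotedge ((hmem' _).mpr (Or.inl h))
  have habQ : s(a, b) ∉ Q.edges := fun h => hnotedge ((hmem' _).mpr (Or.inr h))
  have habP' : s(a, b) ∉ P.reverse.edges := by
    rw [Walk.edges_reverse, List.mem_reverse]; exact habP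
  rcases (hmem' e).mp he with heP | heQ
  · exact core_split G' c hchord P.reverse Q hP.reverse hQ habP' habQ
      (by rw [Walk.edges_reverse, List.mem_reverse]; exact heP)
      (fun e' => by rw [hmem' e', Walk.edges_reverse, List.mem_reverse])
      (fun e' h1 h2 => hdisjPQ e' (by rwa [Walk.edges_reverse, List.mem_reverse] at h1) h2)
  · exact core_split G' c hchord Q P.reverse hQ hP.reverse habQ habP' heQ
      (fun e' => by rw [hmem' e', Walk.edges_reverse, List.mem_reverse]; exact or_comm)
      (fun e' h1 h2 => hdisjPQ e' (by rwa [Walk.edges_reverse, List.mem_reverse] at h2) h1)
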